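/- Let X, Y be Polish spaces with Borel probability measures μ, ν and c : X × Y → [0,∞] Borel measurable with c(x,y) < ∞ for (μ⊗ν)-a.e. (x,y). Let π ∈ Π(μ,ν) have finite cost and Γ ⊆ X × Y be Borel with π(Γ) = 1 and c finite on Γ. Then there exist Borel sets O ⊆ X and U ⊆ Y such that Γ' = Γ ∩ (O × U) satisfies π(Γ') = 1 and (Γ',c) is connecting. -/

import Mathlib

open MeasureTheory Set
open scoped ENNReal

noncomputable section

def IsCoupling {X Y : Type*} [MeasurableSpace X] [MeasurableSpace Y]
    (μ : Measure X) (ν : Measure Y) (π : Measure (X × Y)) : Prop :=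
  π.map Prod.fst = μ ∧ π.map Prod.snd = ν

def CMonotoneSet {X Y : Type*} (c : X × Y → ℝ≥0∞) (Γ : Set (X × Y)) : Prop :=
  ∀ (n : ℕ) (f : Fin (n + 1) → X × Y), (∀ i, f i ∈ Γ) →
    ∑ i, c (f i) ≤ ∑ i, c ((f i).1, (f (i + 1)).2)

def ChainLe {X Y : Type*} (c : X × Y → ℝ≥0∞) (Γ : Set (X × Y)) (p q : X × Y) : Prop :=
  ∃ (n : ℕ) (g : Fin (n + 1) → X × Y), (∀ i, g i ∈ Γ) ∧ g 0 = p ∧ g (Fin.last n) = q ∧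
    ∀ i : Fin n, c ((g i.succ).1, (g i.castSucc).2) < ⊤

def ChainEquiv {X Y : Type*} (c : X × Y → ℝ≥0∞) (Γ : Set (X × Y)) (p q : X × Y) : Prop :=
  ChainLe c Γ p q ∧ ChainLe c Γ q p

def Connecting {X Y : Type*} (c : X × Y → ℝ≥0∞) (Γ : Set (X × Y)) : Prop :=
  (∀ p ∈ Γ, c p < ⊤) ∧ ∀ p ∈ Γ, ∀ q ∈ Γ, ChainEquiv c Γ p q

/-- A three-point chain through a midpoint. -/
lemma chainLe_of_mid {X Y : Type*} (c : X × Y → ℝ≥0∞) (Γ : Set (X × Y)) (p m q : X × Y)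
    (hp : p ∈ Γ) (hm : m ∈ Γ) (hq : q ∈ Γ)
    (h1 : c (m.1, p.2) < ⊤) (h2 : c (q.1, m.2) < ⊤) : ChainLe c Γ p q := by
  refine ⟨2, ![p, m, q], ?_, rfl, rfl, ?_⟩
  · intro i; fin_cases i <;> simpa
  · intro i; fin_cases i <;> simpa

theorem exists_connecting_subset
    {X Y : Type*} [MeasurableSpace X] [TopologicalSpace X] [PolishSpace X] [BorelSpace X]
    [MeasurableSpace Y] [TopologicalSpace Y] [PolishSpace Y] [BorelSpace Y]
    (μ : Measure X) (ν : Measure Y) [IsProbabilityMeasure μ] [IsProbabilityMeasure ν]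
    (c : X × Y → ℝ≥0∞) (hc : Measurable c)
    (hcfin : ∀ᵐ p ∂(μ.prod ν), c p < ⊤)
    (π : Measure (X × Y)) (hπ : IsCoupling μ ν π) (hfin : ∫⁻ p, c p ∂π ≠ ⊤)
    (Γ : Set (X × Y)) (hΓm : MeasurableSet Γ) (hΓ1 : π Γ = 1)
    (hΓfin : ∀ p ∈ Γ, c p < ⊤) :
    ∃ (O : Set X) (U : Set Y), MeasurableSet O ∧ MeasurableSet U ∧
      π (Γ ∩ O ×ˢ U) = 1 ∧ Connecting c (Γ ∩ O ×ˢ U) := by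
  have hmeas : MeasurableSet {q : X × Y | c q < ⊤} := measurableSet_lt hc measurable_const
  have hA : ∀ᵐ x ∂μ, ∀ᵐ y ∂ν, c (x, y) < ⊤ := Measure.ae_ae_of_ae_prod hcfin
  have hB : ∀ᵐ y ∂ν, ∀ᵐ x ∂μ, c (x, y) < ⊤ := by
    rw [← Measure.ae_ae_comm hmeas]; exact hA
  -- pull back null sets under the projections
  have hfst : ∀ s : Set X, μ s = 0 → π (Prod.fst ⁻¹' s) = 0 := by
    intro s hs
    have h := Measure.le_map_apply (measurable_fst.aemeasurable (μ := π)) s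
    rw [hπ.1, hs] at h
    exact le_antisymm h zero_le
  have hsnd : ∀ s : Set Y, ν s = 0 → π (Prod.snd ⁻¹' s) = 0 := by
    intro s hs
    have h := Measure.le_map_apply (measurable_snd.aemeasurable (μ := π)) s
    rw [hπ.2, hs] at h
    exact le_antisymm h zero_le
  set A : Set X := {x | ∀ᵐ y ∂ν, c (x, y) < ⊤} with hAdef
  set B : Set Y := {y | ∀ᵐ x ∂μ, c (x, y) < ⊤} with hBdef
  have hμA : μ Aᶜ = 0 := hA
  have hνB : ν Bᶜ = 0 := hB
  -- find a good point p₀ ∈ Γ with both slices a.e. finite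
  have hbad : π (Prod.fst ⁻¹' Aᶜ ∪ Prod.snd ⁻¹' Bᶜ) = 0 :=
    measure_union_null (hfst _ hμA) (hsnd _ hνB)
  have hgood : π (Γ \ (Prod.fst ⁻¹' Aᶜ ∪ Prod.snd ⁻¹' Bᶜ)) = 1 := by
    rw [measure_diff_null hbad]; exact hΓ1
  have hne : (Γ \ (Prod.fst ⁻¹' Aᶜ ∪ Prod.snd ⁻¹' Bᶜ)).Nonempty := by
    apply nonempty_of_measure_ne_zero (μ := π); rw [hgood]; exact one_ne_zero
  obtain ⟨p₀, hp₀Γ, hp₀bad⟩ := hne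
  rw [mem_union, not_or] at hp₀bad
  obtain ⟨hp₀A, hp₀B⟩ := hp₀bad
  have hp₀A : p₀.1 ∈ A := not_not.mp hp₀A
  have hp₀B : p₀.2 ∈ B := not_not.mp hp₀B
  -- define O and U
  refine ⟨{x | c (x, p₀.2) < ⊤}, {y | c (p₀.1, y) < ⊤}, ?_, ?_, ?_, ?_⟩
  · exact measurableSet_lt (hc.comp (measurable_id.prodMk measurable_const)) measurable_const
  · exact measurableSet_lt (hc.comp (measurable_const.prodMk measurable_id)) measurable_const
  · -- measure is one
    have hOc : μ {x | c (x, p₀.2) < ⊤}ᶜ = 0 := hp₀B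
    have hUc : ν {y | c (p₀.1, y) < ⊤}ᶜ = 0 := hp₀A
    have hcompl : π ({x | c (x, p₀.2) < ⊤} ×ˢ {y | c (p₀.1, y) < ⊤})ᶜ = 0 := by
      refine measure_mono_null ?_
        (measure_union_null (hfst _ hOc) (hsnd _ hUc))
      intro q hq
      rw [mem_compl_iff, mem_prod, not_and_or] at hq
      rcases hq with h | h
      · exact Or.inl h
      · exact Or.inr h
    calc π (Γ ∩ {x | c (x, p₀.2) < ⊤} ×ˢ {y | c (p₀.1, y) < ⊤})
        = π (Γ \ ({x | c (x, p₀.2) < ⊤} ×ˢ {y | c (p₀.1, y) < ⊤})ᶜ) := by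
          rw [diff_compl]
      _ = π Γ := measure_diff_null hcompl
      _ = 1 := hΓ1
  · -- connecting
    constructor
    · intro p hp; exact hΓfin p hp.1
    · intro p hp q hq
      have hcp₀ : c p₀ < ⊤ := hΓfin p₀ hp₀Γ
      have hm : p₀ ∈ Γ ∩ {x | c (x, p₀.2) < ⊤} ×ˢ {y | c (p₀.1, y) < ⊤} :=
        ⟨hp₀Γ, hcp₀, hcp₀⟩
      exact ⟨chainLe_of_mid c _ p p₀ q hp hm hq hp.2.2 hq.2.1,
             chainLe_of_mid c _ q p₀ p hq hm hp hq.2.2 hp.2.1⟩
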